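/- Over ℚ, the 10×10 matrix C_{10} + T(1,9,6,1) has finite multiplicative order equal to 40, the 10×10 matrix C_{10} + T(1,8,6,2) has finite multiplicative order equal to 60, and no 10×10 permutation matrix has multiplicative order 40 or 60. -/

import Mathlib

open Polynomial

/-- `Ccyc k` is the `k × k` companion matrix of `x^k - 1`: the permutation matrix with `1`
in (1-based) positions `(i+1, i)` for `1 ≤ i ≤ k-1` and in position `(1, k)`. -/
def Ccyc (k : ℕ) : Matrix (Fin k) (Fin k) ℚ :=
  Matrix.of fun r c => if (r : ℕ) = ((c : ℕ) + 1) % k then 1 else 0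

/-- `Tblock n i1 j1 i2 j2` is the `n × n` matrix with entry `1` in (1-based) positions
`(i1, j1)` and `(i2, j2)`, entry `-1` in positions `(i1, j2)` and `(i2, j1)`, and `0`
elsewhere. -/
def Tblock (n i1 j1 i2 j2 : ℕ) : Matrix (Fin n) (Fin n) ℚ :=
  Matrix.of fun r c =>
    (if (r : ℕ) + 1 = i1 ∧ (c : ℕ) + 1 = j1 then (1 : ℚ) else 0)
      + (if (r : ℕ) + 1 = i2 ∧ (c : ℕ) + 1 = j2 then (1 : ℚ) else 0)
      - (if (r : ℕ) + 1 = i1 ∧ (c : ℕ) + 1 = j2 then (1 : ℚ) else 0)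
      - (if (r : ℕ) + 1 = i2 ∧ (c : ℕ) + 1 = j1 then (1 : ℚ) else 0)

/-- Matrix direct sum (block diagonal sum), realized on `Fin (p + q)`. -/
def dsum {p q : ℕ} (A : Matrix (Fin p) (Fin p) ℚ) (B : Matrix (Fin q) (Fin q) ℚ) :
    Matrix (Fin (p + q)) (Fin (p + q)) ℚ :=
  Matrix.reindex finSumFinEquiv finSumFinEquiv (Matrix.fromBlocks A 0 0 B)

/-- A square rational matrix has finite multiplicative order if `A ^ t = 1` for some `t > 0`. -/
def HasFinOrder {n : ℕ} (A : Matrix (Fin n) (Fin n) ℚ) : Prop :=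
  ∃ t : ℕ, 0 < t ∧ A ^ t = 1

/-- `OrderIs A t` : `t` is the least positive integer with `A ^ t = 1`. -/
def OrderIs {n : ℕ} (A : Matrix (Fin n) (Fin n) ℚ) (t : ℕ) : Prop :=
  IsLeast {s : ℕ | 0 < s ∧ A ^ s = 1} t

/-- Alternating sign matrix: entries in `{0, 1, -1}`, all partial row- and column-sums equal
`0` or `1`, and every full row and column sums to `1`. -/
def IsASM {n : ℕ} (A : Matrix (Fin n) (Fin n) ℚ) : Prop :=
  (∀ i j : Fin n, A i j = 0 ∨ A i j = 1 ∨ A i j = -1) ∧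
  (∀ i k : Fin n, (∑ j ∈ Finset.Iic k, A i j) = 0 ∨ (∑ j ∈ Finset.Iic k, A i j) = 1) ∧
  (∀ j k : Fin n, (∑ i ∈ Finset.Iic k, A i j) = 0 ∨ (∑ i ∈ Finset.Iic k, A i j) = 1) ∧
  (∀ i : Fin n, (∑ j, A i j) = 1) ∧
  (∀ j : Fin n, (∑ i, A i j) = 1)

/-- Permutation matrix. -/
def IsPermMat {n : ℕ} (A : Matrix (Fin n) (Fin n) ℚ) : Prop :=
  ∃ σ : Equiv.Perm (Fin n), ∀ i j, A i j = if σ i = j then 1 else 0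

/-- `A` is permutation similar to an alternating sign matrix:
`Pᵀ * A * P` is an ASM for some permutation matrix `P`. -/
def PermSimilarToASM {n : ℕ} (A : Matrix (Fin n) (Fin n) ℚ) : Prop :=
  ∃ P B : Matrix (Fin n) (Fin n) ℚ, IsPermMat P ∧ IsASM B ∧ B = P.transpose * A * P

/-- Similarity over `ℚ`. -/
def SimilarQ {n : ℕ} (A B : Matrix (Fin n) (Fin n) ℚ) : Prop :=
  ∃ S : Matrix (Fin n) (Fin n) ℚ, IsUnit S ∧ B = S⁻¹ * A * S

/-- A `T`-block: a matrix of the form `± T(i1, j1, i2, j2)` with `i1 ≠ i2`, `j1 ≠ j2`. -/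
def IsTBlock {n : ℕ} (M : Matrix (Fin n) (Fin n) ℚ) : Prop :=
  ∃ i1 j1 i2 j2 : ℕ, 1 ≤ i1 ∧ i1 ≤ n ∧ 1 ≤ j1 ∧ j1 ≤ n ∧ 1 ≤ i2 ∧ i2 ≤ n ∧ 1 ≤ j2 ∧ j2 ≤ n ∧
    i1 ≠ i2 ∧ j1 ≠ j2 ∧ (M = Tblock n i1 j1 i2 j2 ∨ M = -Tblock n i1 j1 i2 j2)

def ZM1 : Matrix (Fin 10) (Fin 10) ℤ :=
  !![-1, 0, 0, 0, 0, 0, 0, 0, 1, 1;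
    1, 0, 0, 0, 0, 0, 0, 0, 0, 0;
    0, 1, 0, 0, 0, 0, 0, 0, 0, 0;
    0, 0, 1, 0, 0, 0, 0, 0, 0, 0;
    0, 0, 0, 1, 0, 0, 0, 0, 0, 0;
    1, 0, 0, 0, 1, 0, 0, 0, -1, 0;
    0, 0, 0, 0, 0, 1, 0, 0, 0, 0;
    0, 0, 0, 0, 0, 0, 1, 0, 0, 0;
    0, 0, 0, 0, 0, 0, 0, 1, 0, 0;
    0, 0, 0, 0, 0, 0, 0, 0, 1, 0]

def ZM2 : Matrix (Fin 10) (Fin 10) ℤ :=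
  !![1, 0, 0, 0, 0, 0, 0, 1, 0, -1;
    -1, 0, 0, 0, 0, 0, 0, 0, 1, 1;
    1, 0, 0, 0, 0, 0, 0, 0, 0, 0;
    0, 1, 0, 0, 0, 0, 0, 0, 0, 0;
    0, 0, 1, 0, 0, 0, 0, 0, 0, 0;
    -1, 0, 0, 1, 0, 0, 0, -1, 1, 1;
    1, 0, 0, 0, 1, 0, 0, 0, -1, 0;
    0, 0, 0, 0, 0, 1, 0, 0, 0, 0;
    0, 0, 0, 0, 0, 0, 1, 0, 0, 0;
    0, 0, 0, 0, 0, 0, 0, 1, 0, 0]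

def ZM4 : Matrix (Fin 10) (Fin 10) ℤ :=
  !![1, 0, 0, 0, 0, 1, 0, 0, 0, -1;
    -1, 0, 0, 0, 0, 0, 1, 0, 0, 1;
    1, 0, 0, 0, 0, 0, 0, 1, 0, -1;
    -1, 0, 0, 0, 0, 0, 0, 0, 1, 1;
    1, 0, 0, 0, 0, 0, 0, 0, 0, 0;
    -1, 1, 0, 0, 0, -1, 1, 0, 0, 1;
    1, 0, 1, 0, 0, 0, -1, 1, 0, -1;
    -1, 0, 0, 1, 0, 0, 0, -1, 1, 1;
    1, 0, 0, 0, 1, 0, 0, 0, -1, 0;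
    0, 0, 0, 0, 0, 1, 0, 0, 0, 0]

def ZM8 : Matrix (Fin 10) (Fin 10) ℤ :=
  !![0, 1, 0, 0, 0, -1, 1, 0, 0, 0;
    0, 0, 1, 0, 0, 0, -1, 1, 0, 0;
    0, 0, 0, 1, 0, 0, 0, -1, 1, 0;
    0, 0, 0, 0, 1, 0, 0, 0, -1, 1;
    1, 0, 0, 0, 0, 1, 0, 0, 0, -1;
    0, -1, 1, 0, 0, 1, -1, 1, 0, 0;
    0, 0, -1, 1, 0, 0, 1, -1, 1, 0;
    0, 0, 0, -1, 1, 0, 0, 1, -1, 1;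
    1, 0, 0, 0, -1, 1, 0, 0, 1, -1;
    -1, 1, 0, 0, 0, -1, 1, 0, 0, 1]

def ZM16 : Matrix (Fin 10) (Fin 10) ℤ :=
  !![0, 1, -1, 1, 0, -1, 1, -1, 1, 0;
    0, 0, 1, -1, 1, 0, -1, 1, -1, 1;
    1, 0, 0, 1, -1, 1, 0, -1, 1, -1;
    -1, 1, 0, 0, 1, -1, 1, 0, -1, 1;
    1, -1, 1, 0, 0, 1, -1, 1, 0, -1;
    0, -1, 1, -1, 1, 1, -1, 1, -1, 1;
    1, 0, -1, 1, -1, 1, 1, -1, 1, -1;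
    -1, 1, 0, -1, 1, -1, 1, 1, -1, 1;
    1, -1, 1, 0, -1, 1, -1, 1, 1, -1;
    -1, 1, -1, 1, 0, -1, 1, -1, 1, 1]

def ZM20 : Matrix (Fin 10) (Fin 10) ℤ :=
  !![1, -1, 1, -1, 1, 1, -1, 1, -1, 0;
    0, 0, -1, 1, -1, 1, 1, -1, 1, 0;
    0, 1, 0, -1, 1, -1, 1, 1, -1, 0;
    0, -1, 1, 0, -1, 1, -1, 1, 1, 0;
    0, 1, -1, 1, 0, -1, 1, -1, 1, 0;
    0, 1, -1, 1, -1, 0, 1, -1, 1, 0;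
    0, 1, 1, -1, 1, -1, 0, 1, -1, 0;
    0, -1, 1, 1, -1, 1, -1, 0, 1, 0;
    0, 1, -1, 1, 1, -1, 1, -1, 0, 0;
    0, -1, 1, -1, 1, 1, -1, 1, -1, 1]

def ZN1 : Matrix (Fin 10) (Fin 10) ℤ :=
  !![0, -1, 0, 0, 0, 0, 0, 1, 0, 1;
    1, 0, 0, 0, 0, 0, 0, 0, 0, 0;
    0, 1, 0, 0, 0, 0, 0, 0, 0, 0;
    0, 0, 1, 0, 0, 0, 0, 0, 0, 0;
    0, 0, 0, 1, 0, 0, 0, 0, 0, 0;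
    0, 1, 0, 0, 1, 0, 0, -1, 0, 0;
    0, 0, 0, 0, 0, 1, 0, 0, 0, 0;
    0, 0, 0, 0, 0, 0, 1, 0, 0, 0;
    0, 0, 0, 0, 0, 0, 0, 1, 0, 0;
    0, 0, 0, 0, 0, 0, 0, 0, 1, 0]

def ZN2 : Matrix (Fin 10) (Fin 10) ℤ :=
  !![-1, 0, 0, 0, 0, 0, 1, 0, 1, 0;
    0, -1, 0, 0, 0, 0, 0, 1, 0, 1;
    1, 0, 0, 0, 0, 0, 0, 0, 0, 0;
    0, 1, 0, 0, 0, 0, 0, 0, 0, 0;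
    0, 0, 1, 0, 0, 0, 0, 0, 0, 0;
    1, 0, 0, 1, 0, 0, -1, 0, 0, 0;
    0, 1, 0, 0, 1, 0, 0, -1, 0, 0;
    0, 0, 0, 0, 0, 1, 0, 0, 0, 0;
    0, 0, 0, 0, 0, 0, 1, 0, 0, 0;
    0, 0, 0, 0, 0, 0, 0, 1, 0, 0]

def ZN4 : Matrix (Fin 10) (Fin 10) ℤ :=
  !![1, 1, 0, 0, 1, 0, 0, -1, -1, 0;
    0, 1, 0, 0, 0, 1, 0, 0, 0, -1;
    -1, 0, 0, 0, 0, 0, 1, 0, 1, 0;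
    0, -1, 0, 0, 0, 0, 0, 1, 0, 1;
    1, 0, 0, 0, 0, 0, 0, 0, 0, 0;
    -1, 0, 0, 0, -1, 0, 1, 1, 1, 0;
    0, -1, 1, 0, 0, -1, 0, 1, 0, 1;
    1, 0, 0, 1, 0, 0, -1, 0, 0, 0;
    0, 1, 0, 0, 1, 0, 0, -1, 0, 0;
    0, 0, 0, 0, 0, 1, 0, 0, 0, 0]

def ZN8 : Matrix (Fin 10) (Fin 10) ℤ :=
  !![1, 1, 0, -1, 0, 1, 1, 0, -1, -1;
    -1, 1, 0, 0, -1, 0, 1, 1, 1, -1;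
    -1, -1, 1, 0, 0, -1, 0, 1, 1, 1;
    1, -1, 0, 1, 0, 0, -1, 0, 0, 1;
    1, 1, 0, 0, 1, 0, 0, -1, -1, 0;
    -1, -1, 1, 1, 0, -1, -1, 1, 1, 1;
    1, -1, 0, 1, 1, 0, -1, -1, 0, 1;
    1, 1, -1, 0, 1, 1, 0, -1, -1, 0;
    0, 1, 0, -1, 0, 1, 1, 0, 0, -1;
    -1, 0, 0, 0, -1, 0, 1, 1, 1, 0]

def ZN12 : Matrix (Fin 10) (Fin 10) ℤ :=
  !![0, 1, 1, 0, -1, -1, 1, 1, 0, -1;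
    -1, 0, 1, 1, 0, -1, -1, 1, 1, 0;
    0, -1, 0, 1, 1, 0, -1, -1, 1, 1;
    1, 0, -1, 0, 1, 1, 0, -1, -1, 1;
    1, 1, 0, -1, 0, 1, 1, 0, -1, -1;
    0, -1, -1, 1, 1, 1, -1, -1, 1, 1;
    1, 0, -1, -1, 1, 1, 1, -1, -1, 1;
    1, 1, 0, -1, -1, 1, 1, 1, -1, -1;
    -1, 1, 1, 0, -1, -1, 1, 1, 1, -1;
    -1, -1, 1, 1, 0, -1, -1, 1, 1, 1]

def ZN16 : Matrix (Fin 10) (Fin 10) ℤ :=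
  !![0, 0, 1, 1, 1, -1, -1, 0, 0, 0;
    0, 0, -1, 1, 1, 1, -1, -1, 1, 0;
    0, 0, -1, -1, 1, 1, 1, -1, 0, 1;
    1, 0, 0, -1, -1, 1, 1, 1, -1, 0;
    0, 1, 1, 0, -1, -1, 1, 1, 0, -1;
    0, 0, -1, -1, 0, 1, 1, 0, 0, 1;
    1, 0, 1, -1, -1, 0, 1, 1, -1, 0;
    0, 1, 1, 1, -1, -1, 0, 1, 0, -1;
    -1, 0, 1, 1, 1, -1, -1, 0, 1, 0;
    0, -1, -1, 1, 1, 1, -1, -1, 1, 1]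

def ZN20 : Matrix (Fin 10) (Fin 10) ℤ :=
  !![1, 0, -1, 0, 1, 1, 0, -1, 0, 0;
    0, 1, -1, -1, 0, 1, 1, 0, 0, 0;
    0, 0, 1, -1, -1, 0, 1, 1, 0, 0;
    0, 0, 1, 1, -1, -1, 0, 1, 0, 0;
    0, 0, 1, 1, 1, -1, -1, 0, 0, 0;
    0, 0, 1, 0, -1, 0, 0, 1, 0, 0;
    0, 0, 1, 1, 0, -1, 0, 0, 0, 0;
    0, 0, 0, 1, 1, 0, -1, 0, 0, 0;
    0, 0, -1, 0, 1, 1, 0, -1, 1, 0;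
    0, 0, -1, -1, 0, 1, 1, 0, 0, 1]

def ZN28 : Matrix (Fin 10) (Fin 10) ℤ :=
  !![1, 1, 1, 0, 0, 0, 0, 0, -1, -1;
    -1, 1, 0, 1, 0, 0, 0, 0, 1, -1;
    -1, -1, 0, 0, 1, 0, 0, 0, 1, 1;
    1, -1, -1, 0, 0, 1, 0, 0, 0, 1;
    1, 1, 0, -1, 0, 0, 1, 0, -1, 0;
    -1, -1, 0, 0, 0, 0, 0, 1, 1, 1;
    1, -1, 0, 0, 0, 0, 0, 0, 0, 1;
    1, 1, 0, 0, 0, 0, 0, 0, -1, 0;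
    0, 1, 1, 0, 0, 0, 0, 0, 0, -1;
    -1, 0, 0, 1, 0, 0, 0, 0, 1, 0]

def ZN30 : Matrix (Fin 10) (Fin 10) ℤ :=
  !![0, -1, 0, 0, 0, 0, 0, 0, 1, 1;
    1, 0, 0, 0, 0, 0, 0, 0, -1, 1;
    1, 1, 1, 0, 0, 0, 0, 0, -1, -1;
    -1, 1, 0, 1, 0, 0, 0, 0, 1, -1;
    -1, -1, 0, 0, 1, 0, 0, 0, 1, 1;
    1, 1, 0, 0, 0, 1, 0, 0, -1, -1;
    -1, 1, 0, 0, 0, 0, 1, 0, 1, -1;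
    -1, -1, 0, 0, 0, 0, 0, 1, 1, 1;
    1, -1, 0, 0, 0, 0, 0, 0, 0, 1;
    1, 1, 0, 0, 0, 0, 0, 0, -1, 0]
def CcycZ (k : ℕ) : Matrix (Fin k) (Fin k) ℤ :=
  Matrix.of fun r c => if (r : ℕ) = ((c : ℕ) + 1) % k then 1 else 0

def TblockZ (n i1 j1 i2 j2 : ℕ) : Matrix (Fin n) (Fin n) ℤ :=
  Matrix.of fun r c =>
    (if (r : ℕ) + 1 = i1 ∧ (c : ℕ) + 1 = j1 then (1 : ℤ) else 0)
      + (if (r : ℕ) + 1 = i2 ∧ (c : ℕ) + 1 = j2 then (1 : ℤ) else 0)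
      - (if (r : ℕ) + 1 = i1 ∧ (c : ℕ) + 1 = j2 then (1 : ℤ) else 0)
      - (if (r : ℕ) + 1 = i2 ∧ (c : ℕ) + 1 = j1 then (1 : ℤ) else 0)

def icast : Matrix (Fin 10) (Fin 10) ℤ →+* Matrix (Fin 10) (Fin 10) ℚ :=
  (Int.castRingHom ℚ).mapMatrix

lemma icast_inj : Function.Injective icast := by
  intro A B h
  ext i j
  have h2 : (icast A) i j = (icast B) i j := by rw [h]
  simpa [icast, RingHom.mapMatrix_apply, Matrix.map_apply] using h2

lemma cast_CT (i1 j1 i2 j2 : ℕ) :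
    Ccyc 10 + Tblock 10 i1 j1 i2 j2 = icast (CcycZ 10 + TblockZ 10 i1 j1 i2 j2) := by
  rw [map_add]
  congr 1
  · ext r c
    simp [Ccyc, CcycZ, icast, RingHom.mapMatrix_apply, Matrix.map_apply,
      apply_ite (fun x : ℤ => (x : ℚ))]
  · ext r c
    simp only [Tblock, TblockZ, icast, RingHom.mapMatrix_apply, Matrix.map_apply,
      Matrix.of_apply, Int.coe_castRingHom, Int.cast_sub, Int.cast_add,
      apply_ite (fun x : ℤ => (x : ℚ)), Int.cast_one, Int.cast_zero]

/-- From `orderOf` to `OrderIs`. -/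
lemma orderIs_of_orderOf {n : ℕ} {A : Matrix (Fin n) (Fin n) ℚ} {t : ℕ}
    (ht : 0 < t) (h : orderOf A = t) : OrderIs A t := by
  constructor
  · exact ⟨ht, by rw [← h]; exact pow_orderOf_eq_one A⟩
  · rintro s ⟨hs, hss⟩
    have := orderOf_dvd_of_pow_eq_one hss
    rw [h] at this
    exact Nat.le_of_dvd hs this

lemma order1 : OrderIs (Ccyc 10 + Tblock 10 1 9 6 1) 40 := by
  have hz : CcycZ 10 + TblockZ 10 1 9 6 1 = ZM1 := by decide
  have hA : Ccyc 10 + Tblock 10 1 9 6 1 = icast ZM1 := by rw [cast_CT, hz]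
  have p2 : ZM1 ^ 2 = ZM2 := by rw [pow_two]; decide
  have p4 : ZM1 ^ 4 = ZM4 := by rw [show (4:ℕ) = 2 + 2 from rfl, pow_add, p2]; decide
  have p8 : ZM1 ^ 8 = ZM8 := by rw [show (8:ℕ) = 4 + 4 from rfl, pow_add, p4]; decide
  have p16 : ZM1 ^ 16 = ZM16 := by rw [show (16:ℕ) = 8 + 8 from rfl, pow_add, p8]; decide
  have p20 : ZM1 ^ 20 = ZM20 := by
    rw [show (20:ℕ) = 16 + 4 from rfl, pow_add, p16, p4]; decide
  have p40 : ZM1 ^ 40 = 1 := by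
    rw [show (40:ℕ) = 20 + 20 from rfl, pow_add, p20]; decide
  have h40 : (icast ZM1) ^ 40 = 1 := by rw [← map_pow, p40, map_one]
  have hne : ∀ k : ℕ, ZM1 ^ k ≠ 1 → (icast ZM1) ^ k ≠ 1 := by
    intro k hk h
    exact hk (icast_inj (by rw [map_pow, h, map_one]))
  rw [hA]
  apply orderIs_of_orderOf (by norm_num)
  apply orderOf_eq_of_pow_and_pow_div_prime (by norm_num) h40
  intro p pp hpd
  have hp : p = 2 ∨ p = 5 := by
    rcases (Nat.Prime.dvd_mul pp).1 (by exact_mod_cast hpd : p ∣ 8 * 5) with h | h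
    · exact Or.inl ((Nat.prime_dvd_prime_iff_eq pp Nat.prime_two).1
        (pp.dvd_of_dvd_pow (by exact_mod_cast h : p ∣ 2 ^ 3)))
    · exact Or.inr ((Nat.prime_dvd_prime_iff_eq pp (by norm_num)).1 h)
  rcases hp with rfl | rfl
  · exact hne 20 (by rw [p20]; decide)
  · exact hne 8 (by rw [p8]; decide)

lemma order2 : OrderIs (Ccyc 10 + Tblock 10 1 8 6 2) 60 := by
  have hz : CcycZ 10 + TblockZ 10 1 8 6 2 = ZN1 := by decide
  have hA : Ccyc 10 + Tblock 10 1 8 6 2 = icast ZN1 := by rw [cast_CT, hz]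
  have p2 : ZN1 ^ 2 = ZN2 := by rw [pow_two]; decide
  have p4 : ZN1 ^ 4 = ZN4 := by rw [show (4:ℕ) = 2 + 2 from rfl, pow_add, p2]; decide
  have p8 : ZN1 ^ 8 = ZN8 := by rw [show (8:ℕ) = 4 + 4 from rfl, pow_add, p4]; decide
  have p12 : ZN1 ^ 12 = ZN12 := by
    rw [show (12:ℕ) = 8 + 4 from rfl, pow_add, p8, p4]; decide
  have p16 : ZN1 ^ 16 = ZN16 := by rw [show (16:ℕ) = 8 + 8 from rfl, pow_add, p8]; decide
  have p20 : ZN1 ^ 20 = ZN20 := by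
    rw [show (20:ℕ) = 16 + 4 from rfl, pow_add, p16, p4]; decide
  have p28 : ZN1 ^ 28 = ZN28 := by
    rw [show (28:ℕ) = 20 + 8 from rfl, pow_add, p20, p8]; decide
  have p30 : ZN1 ^ 30 = ZN30 := by
    rw [show (30:ℕ) = 28 + 2 from rfl, pow_add, p28, p2]; decide
  have p60 : ZN1 ^ 60 = 1 := by
    rw [show (60:ℕ) = 30 + 30 from rfl, pow_add, p30]; decide
  have h60 : (icast ZN1) ^ 60 = 1 := by rw [← map_pow, p60, map_one]
  have hne : ∀ k : ℕ, ZN1 ^ k ≠ 1 → (icast ZN1) ^ k ≠ 1 := by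
    intro k hk h
    exact hk (icast_inj (by rw [map_pow, h, map_one]))
  rw [hA]
  apply orderIs_of_orderOf (by norm_num)
  apply orderOf_eq_of_pow_and_pow_div_prime (by norm_num) h60
  intro p pp hpd
  have hp : p = 2 ∨ p = 3 ∨ p = 5 := by
    rcases (Nat.Prime.dvd_mul pp).1 (by exact_mod_cast hpd : p ∣ 4 * 15) with h | h
    · exact Or.inl ((Nat.prime_dvd_prime_iff_eq pp Nat.prime_two).1
        (pp.dvd_of_dvd_pow (by exact_mod_cast h : p ∣ 2 ^ 2)))
    · rcases (Nat.Prime.dvd_mul pp).1 (by exact_mod_cast h : p ∣ 3 * 5) with h2 | h2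
      · exact Or.inr (Or.inl ((Nat.prime_dvd_prime_iff_eq pp Nat.prime_three).1 h2))
      · exact Or.inr (Or.inr ((Nat.prime_dvd_prime_iff_eq pp (by norm_num)).1 h2))
  rcases hp with rfl | rfl | rfl
  · exact hne 30 (by rw [p30]; decide)
  · exact hne 20 (by rw [p20]; decide)
  · exact hne 12 (by rw [p12]; decide)

lemma pair_le_sum {s : Multiset ℕ} {a b : ℕ} (ha : a ∈ s) (hb : b ∈ s) (hne : a ≠ b) :
    a + b ≤ s.sum := by
  have hb' : b ∈ s.erase a := (Multiset.mem_erase_of_ne hne.symm).mpr hb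
  calc a + b ≤ a + (s.erase a).sum := by
        exact Nat.add_le_add_left (Multiset.le_sum_of_mem hb') a
    _ = s.sum := by conv_rhs => rw [← Multiset.cons_erase ha, Multiset.sum_cons]

lemma triple_le_sum {s : Multiset ℕ} {a b c : ℕ} (ha : a ∈ s) (hb : b ∈ s) (hc : c ∈ s)
    (hab : a ≠ b) (hac : a ≠ c) (hbc : b ≠ c) : a + b + c ≤ s.sum := by
  have hb' : b ∈ s.erase a := (Multiset.mem_erase_of_ne hab.symm).mpr hb
  have hc' : c ∈ (s.erase a).erase b :=
    (Multiset.mem_erase_of_ne hbc.symm).mpr ((Multiset.mem_erase_of_ne hac.symm).mpr hc)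
  calc a + b + c ≤ a + (b + ((s.erase a).erase b).sum) := by
        have := Multiset.le_sum_of_mem hc'
        omega
    _ = a + (b ::ₘ (s.erase a).erase b).sum := by rw [Multiset.sum_cons]
    _ = a + (s.erase a).sum := by rw [Multiset.cons_erase hb']
    _ = s.sum := by conv_rhs => rw [← Multiset.cons_erase ha, Multiset.sum_cons]

lemma no_perm_order_40 (σ : Equiv.Perm (Fin 10)) : orderOf σ ≠ 40 := by
  intro h
  have hlcm : σ.cycleType.lcm = 40 := by rw [Equiv.Perm.lcm_cycleType, h]
  have hdvd : ∀ a ∈ σ.cycleType, a ∣ 40 := fun a ha => hlcm ▸ Multiset.dvd_lcm ha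
  have hub : ∀ a ∈ σ.cycleType, a ≤ 10 := fun a ha =>
    (Equiv.Perm.le_card_support_of_mem_cycleType ha).trans
      (by simpa using Finset.card_le_univ σ.support)
  have ha : ∃ a ∈ σ.cycleType, ¬ a ∣ 20 := by
    by_contra h'
    push_neg at h'
    have : σ.cycleType.lcm ∣ 20 := Multiset.lcm_dvd.mpr h'
    rw [hlcm] at this
    norm_num at this
  have hb : ∃ b ∈ σ.cycleType, ¬ b ∣ 8 := by
    by_contra h'
    push_neg at h'
    have : σ.cycleType.lcm ∣ 8 := Multiset.lcm_dvd.mpr h'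
    rw [hlcm] at this
    norm_num at this
  obtain ⟨a, haM, ha20⟩ := ha
  obtain ⟨b, hbM, hb8⟩ := hb
  have ha' : a = 8 := by
    have h1 : a ∣ 40 := hdvd a haM
    have h2 : a ≤ 10 := hub a haM
    interval_cases a <;> revert h1 ha20 <;> decide
  have hb' : b = 5 ∨ b = 10 := by
    have h1 : b ∣ 40 := hdvd b hbM
    have h2 : b ≤ 10 := hub b hbM
    interval_cases b <;> revert h1 hb8 <;> decide
  have hsum : a + b ≤ σ.cycleType.sum := by
    apply pair_le_sum haM hbM
    omega
  rw [Equiv.Perm.sum_cycleType] at hsum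
  have : σ.support.card ≤ 10 := by simpa using Finset.card_le_univ σ.support
  omega

lemma no_perm_order_60 (σ : Equiv.Perm (Fin 10)) : orderOf σ ≠ 60 := by
  intro h
  have hlcm : σ.cycleType.lcm = 60 := by rw [Equiv.Perm.lcm_cycleType, h]
  have hdvd : ∀ a ∈ σ.cycleType, a ∣ 60 := fun a ha => hlcm ▸ Multiset.dvd_lcm ha
  have hub : ∀ a ∈ σ.cycleType, a ≤ 10 := fun a ha =>
    (Equiv.Perm.le_card_support_of_mem_cycleType ha).trans
      (by simpa using Finset.card_le_univ σ.support)
  have ha : ∃ a ∈ σ.cycleType, ¬ a ∣ 30 := by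
    by_contra h'
    push_neg at h'
    have : σ.cycleType.lcm ∣ 30 := Multiset.lcm_dvd.mpr h'
    rw [hlcm] at this
    norm_num at this
  have hb : ∃ b ∈ σ.cycleType, ¬ b ∣ 20 := by
    by_contra h'
    push_neg at h'
    have : σ.cycleType.lcm ∣ 20 := Multiset.lcm_dvd.mpr h'
    rw [hlcm] at this
    norm_num at this
  have hc : ∃ c ∈ σ.cycleType, ¬ c ∣ 12 := by
    by_contra h'
    push_neg at h'
    have : σ.cycleType.lcm ∣ 12 := Multiset.lcm_dvd.mpr h'
    rw [hlcm] at this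
    norm_num at this
  obtain ⟨a, haM, ha30⟩ := ha
  obtain ⟨b, hbM, hb20⟩ := hb
  obtain ⟨c, hcM, hc12⟩ := hc
  have ha' : a = 4 := by
    have h1 : a ∣ 60 := hdvd a haM
    have h2 : a ≤ 10 := hub a haM
    interval_cases a <;> revert h1 ha30 <;> decide
  have hb' : b = 3 ∨ b = 6 := by
    have h1 : b ∣ 60 := hdvd b hbM
    have h2 : b ≤ 10 := hub b hbM
    interval_cases b <;> revert h1 hb20 <;> decide
  have hc' : c = 5 ∨ c = 10 := by
    have h1 : c ∣ 60 := hdvd c hcM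
    have h2 : c ≤ 10 := hub c hcM
    interval_cases c <;> revert h1 hc12 <;> decide
  have hsum : a + b + c ≤ σ.cycleType.sum := by
    apply triple_le_sum haM hbM hcM <;> omega
  rw [Equiv.Perm.sum_cycleType] at hsum
  have : σ.support.card ≤ 10 := by simpa using Finset.card_le_univ σ.support
  omega

def pmat {n : ℕ} (σ : Equiv.Perm (Fin n)) : Matrix (Fin n) (Fin n) ℚ :=
  Matrix.of fun i j => if σ i = j then 1 else 0

lemma pmat_one {n : ℕ} : pmat (1 : Equiv.Perm (Fin n)) = 1 := by
  ext i j
  simp [pmat, Matrix.one_apply]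
  exact if_congr Iff.rfl rfl rfl

lemma pmat_mul {n : ℕ} (σ τ : Equiv.Perm (Fin n)) : pmat σ * pmat τ = pmat (τ * σ) := by
  ext i j
  simp only [pmat, Matrix.mul_apply, Matrix.of_apply, boole_mul, Finset.sum_ite_eq,
    Finset.mem_univ, if_true, Equiv.Perm.mul_apply]
  exact if_congr Iff.rfl rfl rfl

lemma pmat_pow {n : ℕ} (σ : Equiv.Perm (Fin n)) (t : ℕ) : pmat σ ^ t = pmat (σ ^ t) := by
  induction t with
  | zero => simp [pmat_one]
  | succ t ih =>
    rw [pow_succ, ih, pmat_mul, ← pow_succ']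

lemma pmat_eq_one {n : ℕ} {σ : Equiv.Perm (Fin n)} (h : pmat σ = 1) : σ = 1 := by
  apply Equiv.ext
  intro i
  simp only [Equiv.Perm.coe_one, id_eq]
  have h2 : pmat σ i i = (1 : Matrix (Fin n) (Fin n) ℚ) i i := by rw [h]
  simp only [pmat, Matrix.of_apply, Matrix.one_apply_eq] at h2
  by_contra hne
  rw [if_neg hne] at h2
  norm_num at h2
theorem stmt16 :
    OrderIs (Ccyc 10 + Tblock 10 1 9 6 1) 40 ∧
    OrderIs (Ccyc 10 + Tblock 10 1 8 6 2) 60 ∧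
    ∀ P : Matrix (Fin 10) (Fin 10) ℚ, IsPermMat P → ¬ OrderIs P 40 ∧ ¬ OrderIs P 60 := by
  refine ⟨order1, order2, ?_⟩
  rintro P ⟨σ, hσ⟩
  have hP : P = pmat σ := by ext i j; rw [hσ]; rfl
  constructor
  · rintro ⟨⟨-, h40⟩, hlb⟩
    have hσ40 : σ ^ 40 = 1 := pmat_eq_one (by rw [← pmat_pow, ← hP, h40])
    have hdvd : orderOf σ ∣ 40 := orderOf_dvd_of_pow_eq_one hσ40
    have hpos : 0 < orderOf σ := orderOf_pos σ
    have hle : 40 ≤ orderOf σ :=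
      hlb ⟨hpos, by rw [hP, pmat_pow, pow_orderOf_eq_one, pmat_one]⟩
    exact no_perm_order_40 σ (le_antisymm (Nat.le_of_dvd (by norm_num) hdvd) hle)
  · rintro ⟨⟨-, h60⟩, hlb⟩
    have hσ60 : σ ^ 60 = 1 := pmat_eq_one (by rw [← pmat_pow, ← hP, h60])
    have hdvd : orderOf σ ∣ 60 := orderOf_dvd_of_pow_eq_one hσ60
    have hpos : 0 < orderOf σ := orderOf_pos σ
    have hle : 60 ≤ orderOf σ :=
      hlb ⟨hpos, by rw [hP, pmat_pow, pow_orderOf_eq_one, pmat_one]⟩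
    exact no_perm_order_60 σ (le_antisymm (Nat.le_of_dvd (by norm_num) hdvd) hle)
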